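/- Let G_n be the path graph on [n] with edges (i, i+1). The noncommutative LLT polynomial LLT_{G_n} = sum over all words w of length n in the free algebra of t^{asc(w)} w equals sum over compositions I of n of (t-1)^{n - l(I)} Lambda^I, where Lambda_n is embedded in WQSym as M_{12...n} (the sum of strictly increasing words) and Lambda^I = Lambda_{i_1}...Lambda_{i_r}. -/

import Mathlib

open scoped Classical

/-- The packing of a word over the ordered alphabet `ℕ`: each letter is replaced by
its rank among the distinct letters occurring in the word. -/
def packL (w : List ℕ) : List ℕ :=
  w.map fun a => (w.dedup.filter fun b => decide (b ≤ a)).length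

/-- A word of positive integers is packed if its letters are exactly `1, ..., k`. -/
def IsPackedL (w : List ℕ) : Prop :=
  (∀ a ∈ w, 0 < a) ∧ ∀ a ∈ w, ∀ m, 0 < m → m < a → m ∈ w

/-- The product (concatenation convolution) of formal series of words, realizing the
product of polynomials in noncommuting variables: homogeneous components are
`(f * g)(x) = Σ_{x = x₁ x₂} f(x₁) g(x₂)`. -/
noncomputable def conv {R : Type*} [Semiring R] (f g : List ℕ → R) : List ℕ → R :=
  fun x => ∑ k ∈ Finset.range (x.length + 1), f (x.take k) * g (x.drop k)

/-- The unit series. -/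
noncomputable def oneW {R : Type*} [Semiring R] : List ℕ → R :=
  fun x => if x = [] then 1 else 0

/-- The monomial basis of `WQSym`: `M_u = Σ_{pack(w) = u} w`, as a series. -/
noncomputable def MuL {R : Type*} [Semiring R] (u : List ℕ) : List ℕ → R :=
  fun x => if packL x = u then 1 else 0

/-- Product of a list of series. -/
noncomputable def prodConv {R : Type*} [Semiring R] : List (List ℕ → R) → (List ℕ → R)
  | [] => oneW
  | f :: fs => conv f (prodConv fs)

/-- The number of ascents of a word: positions `i` with `w_i < w_{i+1}`. -/
def ascList (w : List ℕ) : ℕ :=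
  ((w.zip w.tail).filter fun p => decide (p.1 < p.2)).length

/-- The elementary noncommutative symmetric function `Λ_m`, embedded in the free
algebra as the sum of strictly increasing words of length `m`. -/
noncomputable def Lam (m : ℕ) : List ℕ → Polynomial ℚ :=
  fun w => if w.length = m ∧ w.Chain' (· < ·) then 1 else 0

/-- For the path graph `G_n`, the noncommutative LLT polynomial
`LLT_{G_n} = Σ_{w ∈ A^n} t^{asc(w)} w` equals
`Σ_{I ⊨ n} (t-1)^{n-ℓ(I)} Λ^I`. -/
def okP : List ℕ → List ℕ → Prop
  | [], w => w = []
  | m :: ms, w => m ≤ w.length ∧ (w.take m).Chain' (· < ·) ∧ okP ms (w.drop m)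

lemma conv_Lam (m : ℕ) (g : List ℕ → Polynomial ℚ) (w : List ℕ) :
    conv (Lam m) g w =
      if m ≤ w.length ∧ (w.take m).Chain' (· < ·) then g (w.drop m) else 0 := by
  unfold conv
  by_cases hm : m ≤ w.length
  · rw [Finset.sum_eq_single m]
    · have h1 : (w.take m).length = m := by simp [hm]
      by_cases hc : (w.take m).Chain' (· < ·)
      · simp [Lam, h1, hc, hm]
      · simp [Lam, h1, hc, hm]
    · intro k hk hkm
      have hk' : k ≤ w.length := Nat.lt_succ_iff.mp (Finset.mem_range.mp hk)
      have h1 : (w.take k).length = k := by simp [hk']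
      simp [Lam, h1, hkm]
    · intro h
      exact absurd (Finset.mem_range.mpr (Nat.lt_succ_of_le hm)) h
  · rw [Finset.sum_eq_zero]
    · simp [hm]
    · intro k hk
      have hk' : k ≤ w.length := Nat.lt_succ_iff.mp (Finset.mem_range.mp hk)
      have h1 : (w.take k).length = k := by simp [hk']
      have h2 : k ≠ m := by omega
      simp [Lam, h1, h2]

lemma prodConv_Lam (l : List ℕ) (w : List ℕ) :
    prodConv (l.map Lam) w = if okP l w then (1 : Polynomial ℚ) else 0 := by
  induction l generalizing w with
  | nil => simp [prodConv, oneW, okP]; split_ifs <;> simp_all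
  | cons m ms ih =>
    simp only [List.map_cons, prodConv, conv_Lam, okP]
    by_cases h1 : m ≤ w.length <;> by_cases h2 : (w.take m).Chain' (· < ·) <;>
      simp [h1, h2, ih]

lemma ascList_cons_cons (a b : ℕ) (v : List ℕ) :
    ascList (a :: b :: v) = (if a < b then 1 else 0) + ascList (b :: v) := by
  unfold ascList
  simp only [List.tail_cons, List.zip_cons_cons, List.filter_cons]
  by_cases h : a < b <;> simp [h] <;> omega

lemma lemB : ∀ n : ℕ, ∀ w : List ℕ, w.length = n + 1 →
    (∑ i ∈ Finset.range (n + 1),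
        if (w.take (i + 1)).Chain' (· < ·) then
          ((Polynomial.X : Polynomial ℚ) - 1) ^ i * Polynomial.X ^ ascList (w.drop (i + 1))
        else 0) = Polynomial.X ^ ascList w := by
  intro n
  induction n with
  | zero =>
    intro w hw
    match w, hw with
    | [a], _ => simp [ascList, List.Chain', List.isChain_singleton]
  | succ n ih =>
    intro w hw
    match w with
    | a :: b :: v =>
      have hlen : (b :: v).length = n + 1 := by simpa using hw
      rw [Finset.sum_range_succ']
      have h0 : ((a :: b :: v).take 1).Chain' (· < ·) := by simp [List.Chain', List.isChain_singleton]
      by_cases hab : a < b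
      · have hasc : ascList (a :: b :: v) = ascList (b :: v) + 1 := by
          rw [ascList_cons_cons]; simp [hab]; omega
        have hstep : ∀ i, ((a :: b :: v).take (i + 1 + 1)).Chain' (· < ·) ↔
            ((b :: v).take (i + 1)).Chain' (· < ·) := by
          intro i
          simp only [List.take_succ_cons, List.Chain', List.isChain_cons_cons]
          tauto
        calc (∑ i ∈ Finset.range (n + 1),
              if ((a :: b :: v).take (i + 1 + 1)).Chain' (· < ·) then
                ((Polynomial.X : Polynomial ℚ) - 1) ^ (i + 1) *
                  Polynomial.X ^ ascList ((a :: b :: v).drop (i + 1 + 1))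
              else 0) +
            (if ((a :: b :: v).take (0 + 1)).Chain' (· < ·) then
              ((Polynomial.X : Polynomial ℚ) - 1) ^ 0 *
                Polynomial.X ^ ascList ((a :: b :: v).drop (0 + 1)) else 0)
            = (Polynomial.X - 1) * (∑ i ∈ Finset.range (n + 1),
                if ((b :: v).take (i + 1)).Chain' (· < ·) then
                  ((Polynomial.X : Polynomial ℚ) - 1) ^ i *
                    Polynomial.X ^ ascList ((b :: v).drop (i + 1)) else 0) +
              Polynomial.X ^ ascList (b :: v) := by
              congr 1
              · rw [Finset.mul_sum]
                apply Finset.sum_congr rfl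
                intro i _
                have hd : (a :: b :: v).drop (i + 1 + 1) = (b :: v).drop (i + 1) := rfl
                by_cases hc : ((b :: v).take (i + 1)).Chain' (· < ·)
                · rw [if_pos ((hstep i).mpr hc), if_pos hc, hd]
                  ring
                · rw [if_neg (fun h => hc ((hstep i).mp h)), if_neg hc, mul_zero]
              · simp [h0, List.Chain', List.isChain_singleton]
          _ = Polynomial.X ^ ascList (a :: b :: v) := by
              rw [ih (b :: v) hlen, hasc]
              ring
      · have hasc : ascList (a :: b :: v) = ascList (b :: v) := by
          rw [ascList_cons_cons]; simp [hab]
        have hz : ∀ i ∈ Finset.range (n + 1),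
            (if ((a :: b :: v).take (i + 1 + 1)).Chain' (· < ·) then
              ((Polynomial.X : Polynomial ℚ) - 1) ^ (i + 1) *
                Polynomial.X ^ ascList ((a :: b :: v).drop (i + 1 + 1)) else 0) = 0 := by
          intro i _
          have : ¬ ((a :: b :: v).take (i + 1 + 1)).Chain' (· < ·) := by
            simp only [List.take_succ_cons, List.Chain', List.isChain_cons_cons]
            tauto
          rw [if_neg this]
        rw [Finset.sum_eq_zero hz]
        simp [h0, hasc, List.Chain', List.isChain_singleton]

lemma sigmaCompExt {n : ℕ} {j k : Fin (n + 1)} (h : j = k)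
    {c1 : Composition (n - ↑j)} {c2 : Composition (n - ↑k)} (hb : c1.blocks = c2.blocks) :
    (⟨j, c1⟩ : Σ i : Fin (n + 1), Composition (n - ↑i)) = ⟨k, c2⟩ := by
  subst h
  obtain rfl : c1 = c2 := Composition.ext hb
  rfl

def splitComp (n : ℕ) : Composition (n + 1) ≃ Σ i : Fin (n + 1), Composition (n - i) where
  toFun c :=
    have hne : c.blocks ≠ [] := by
      intro h
      have hs := c.blocks_sum
      rw [h] at hs
      simp at hs
    have hmem : c.blocks.head! ∈ c.blocks := List.head!_mem_self hne
    have hle : c.blocks.head! ≤ c.blocks.sum :=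
      List.single_le_sum (fun x _ => Nat.zero_le x) _ hmem
    have hpos : 0 < c.blocks.head! := c.blocks_pos hmem
    have hs := c.blocks_sum
    ⟨⟨c.blocks.head! - 1, by omega⟩,
     ⟨c.blocks.tail, fun hi => c.blocks_pos (List.mem_of_mem_tail hi), by
        have hcons := List.cons_head!_tail hne
        have h2 : (c.blocks.head! :: c.blocks.tail).sum = n + 1 := by rw [hcons, hs]
        simp only [List.sum_cons] at h2
        simp only
        omega⟩⟩
  invFun p :=
    ⟨(↑p.1 + 1) :: p.2.blocks, by
      intro i hi
      rcases List.mem_cons.mp hi with h | h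
      · omega
      · exact p.2.blocks_pos h, by
      have h1 := p.2.blocks_sum
      have h2 := p.1.isLt
      simp [List.sum_cons, h1]
      omega⟩
  left_inv c := by
    apply Composition.ext
    have hne : c.blocks ≠ [] := by
      intro h
      have hs := c.blocks_sum
      rw [h] at hs
      simp at hs
    have hpos : 0 < c.blocks.head! := c.blocks_pos (List.head!_mem_self hne)
    show (c.blocks.head! - 1 + 1) :: c.blocks.tail = c.blocks
    rw [Nat.sub_add_cancel hpos, List.cons_head!_tail hne]
  right_inv p := by
    rcases p with ⟨i, c⟩
    apply sigmaCompExt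
    · apply Fin.ext
      show ((↑i + 1 : ℕ) :: c.blocks).head! - 1 = ↑i
      simp
    · rfl

example : True := trivial

lemma splitComp_symm_blocks (n : ℕ) (i : Fin (n + 1)) (c : Composition (n - ↑i)) :
    ((splitComp n).symm ⟨i, c⟩).blocks = ((i : ℕ) + 1) :: c.blocks := rfl

lemma mainAux (n : ℕ) : ∀ w : List ℕ,
    (∑ c : Composition n, ((Polynomial.X : Polynomial ℚ) - 1) ^ (n - c.length) *
        (if okP c.blocks w then 1 else 0)) =
      if w.length = n then (Polynomial.X : Polynomial ℚ) ^ ascList w else 0 := by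
  induction n using Nat.strong_induction_on with
  | _ n ih =>
  match n, ih with
  | 0, _ =>
    intro w
    have hblk : ∀ c : Composition 0, c.blocks = [] := fun c => by
      cases hbl : c.blocks with
      | nil => rfl
      | cons a t =>
        have hs := c.blocks_sum
        rw [hbl] at hs
        have hp := c.blocks_pos (hbl ▸ (List.mem_cons_self : a ∈ a :: t))
        simp [List.sum_cons] at hs
        omega
    haveI : Unique (Composition 0) :=
      ⟨⟨Composition.ones 0⟩, fun c => Composition.ext (by rw [hblk, hblk])⟩
    rw [Fintype.sum_unique, hblk]
    by_cases hw : w = [] <;> simp [okP, hw, ascList, List.length_eq_zero_iff]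
  | n + 1, ih =>
    intro w
    rw [← Equiv.sum_comp (splitComp n).symm, ← Finset.univ_sigma_univ, Finset.sum_sigma]
    have hterm : ∀ i : Fin (n + 1),
        (∑ c : Composition (n - ↑i),
          ((Polynomial.X : Polynomial ℚ) - 1) ^ (n + 1 - ((splitComp n).symm ⟨i, c⟩).length) *
            (if okP ((splitComp n).symm ⟨i, c⟩).blocks w then 1 else 0)) =
        if ↑i + 1 ≤ w.length ∧ (w.take (↑i + 1)).Chain' (· < ·) then
          ((Polynomial.X : Polynomial ℚ) - 1) ^ (i : ℕ) *
            (if (w.drop (↑i + 1)).length = n - ↑i then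
              (Polynomial.X : Polynomial ℚ) ^ ascList (w.drop (↑i + 1)) else 0)
        else 0 := by
      intro i
      have hlen2 : ∀ c : Composition (n - ↑i),
          ((splitComp n).symm ⟨i, c⟩).length = c.length + 1 := fun c => by
        simp [Composition.length, splitComp_symm_blocks]
      have step : ∀ c : Composition (n - ↑i),
          ((Polynomial.X : Polynomial ℚ) - 1) ^ (n + 1 - ((splitComp n).symm ⟨i, c⟩).length) *
            (if okP ((splitComp n).symm ⟨i, c⟩).blocks w then 1 else 0) =
          if ↑i + 1 ≤ w.length ∧ (w.take (↑i + 1)).Chain' (· < ·) then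
            ((Polynomial.X : Polynomial ℚ) - 1) ^ (i : ℕ) *
              (((Polynomial.X : Polynomial ℚ) - 1) ^ (n - ↑i - c.length) *
                (if okP c.blocks (w.drop (↑i + 1)) then 1 else 0))
          else 0 := by
        intro c
        rw [splitComp_symm_blocks, hlen2]
        have hcl : c.length ≤ n - ↑i := Composition.length_le c
        have hil : (i : ℕ) ≤ n := Nat.lt_succ_iff.mp i.isLt
        have hexp : n + 1 - (c.length + 1) = ↑i + (n - ↑i - c.length) := by omega
        rw [hexp, pow_add]
        simp only [okP]
        by_cases h1 : ↑i + 1 ≤ w.length <;>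
          by_cases h2 : (w.take (↑i + 1)).Chain' (· < ·) <;>
          by_cases h3 : okP c.blocks (w.drop (↑i + 1)) <;>
          simp [h1, h2, h3, mul_assoc]
      rw [Finset.sum_congr rfl (fun c _ => step c)]
      by_cases hA : ↑i + 1 ≤ w.length ∧ (w.take (↑i + 1)).Chain' (· < ·)
      · simp only [if_pos hA]
        rw [← Finset.mul_sum, ih (n - ↑i) (by omega) (w.drop (↑i + 1))]
      · simp only [if_neg hA, Finset.sum_const_zero]
    rw [Finset.sum_congr rfl (fun i _ => hterm i)]
    by_cases hw : w.length = n + 1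
    · rw [if_pos hw]
      have hsimp : ∀ i : Fin (n + 1),
          (if ↑i + 1 ≤ w.length ∧ (w.take (↑i + 1)).Chain' (· < ·) then
            ((Polynomial.X : Polynomial ℚ) - 1) ^ (i : ℕ) *
              (if (w.drop (↑i + 1)).length = n - ↑i then
                (Polynomial.X : Polynomial ℚ) ^ ascList (w.drop (↑i + 1)) else 0)
          else 0) =
          if (w.take (↑i + 1)).Chain' (· < ·) then
            ((Polynomial.X : Polynomial ℚ) - 1) ^ (i : ℕ) *
              Polynomial.X ^ ascList (w.drop (↑i + 1)) else 0 := by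
        intro i
        have h1 : ↑i + 1 ≤ w.length := by have := i.isLt; omega
        have h2 : (w.drop (↑i + 1)).length = n - ↑i := by
          rw [List.length_drop]; omega
        simp [h1, h2]
      rw [Finset.sum_congr rfl (fun i _ => hsimp i),
        Fin.sum_univ_eq_sum_range (fun j =>
          if (w.take (j + 1)).Chain' (· < ·) then
            ((Polynomial.X : Polynomial ℚ) - 1) ^ j *
              Polynomial.X ^ ascList (w.drop (j + 1)) else 0) (n + 1)]
      exact lemB n w hw
    · rw [if_neg hw, Finset.sum_eq_zero]
      intro i _
      by_cases h1 : ↑i + 1 ≤ w.length ∧ (w.take (↑i + 1)).Chain' (· < ·)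
      · rw [if_pos h1]
        have h2 : ¬ (w.drop (↑i + 1)).length = n - ↑i := by
          rw [List.length_drop]
          have := i.isLt
          have := h1.1
          omega
        rw [if_neg h2, mul_zero]
      · rw [if_neg h1]

theorem stmt13 (n : ℕ) (w : List ℕ) :
    (if w.length = n then (Polynomial.X : Polynomial ℚ) ^ ascList w else 0) =
      ∑ c : Composition n,
        ((Polynomial.X : Polynomial ℚ) - 1) ^ (n - c.length) *
          prodConv (c.blocks.map Lam) w := by
  rw [← mainAux n w]
  exact Finset.sum_congr rfl fun c _ => by rw [prodConv_Lam]
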